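/- Let D be a weak DBA with n states recognising L, and let u ∈ Σ*, x, y ∈ Σ⁺. If the state T(u·x^n) lies in an accepting SCC of D and T(u·x^n) = T(u·x^n·x), then u·x^ω ∈ L. -/

import Mathlib

/-- `wpow v k = v^k`, the `k`-fold concatenation of `v`. -/
def wpow {A : Type*} (v : List A) (k : ℕ) : List A :=
  (List.replicate k v).flatten

/-- `upWord u v _ = u · v^ω` as a function `ℕ → A`. -/
def upWord {A : Type*} (u v : List A) (hv : v ≠ []) : ℕ → A :=
  fun i =>
    if h : i < u.length then u.get ⟨i, h⟩
    else v.get ⟨(i - u.length) % v.length, Nat.mod_lt _ (List.length_pos_iff.mpr hv)⟩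

/-- The run of a deterministic automaton on an infinite word. -/
def run {A Q : Type*} (δ : Q → A → Q) (q₀ : Q) (w : ℕ → A) : ℕ → Q
  | 0 => q₀
  | n + 1 => δ (run δ q₀ w n) (w n)

lemma wpow_succ {A : Type*} (v : List A) (k : ℕ) : wpow v (k+1) = v ++ wpow v k := by
  simp [wpow, List.replicate_succ]

lemma wpow_succ' {A : Type*} (v : List A) (k : ℕ) : wpow v (k+1) = wpow v k ++ v := by
  induction k with
  | zero => simp [wpow]
  | succ k ih => rw [wpow_succ, ih, ← List.append_assoc, ← wpow_succ, ih]

lemma wpow_length {A : Type*} (v : List A) (k : ℕ) : (wpow v k).length = k * v.length := by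
  induction k with
  | zero => simp [wpow]
  | succ k ih => rw [wpow_succ]; simp [ih, Nat.succ_mul, Nat.add_comm]

lemma wpow_getElem {A : Type*} (v : List A) (k j : ℕ) (h : j < (wpow v k).length)
    (h2 : j % v.length < v.length) :
    (wpow v k)[j] = v[j % v.length] := by
  induction k generalizing j with
  | zero => simp [wpow] at h
  | succ k ih =>
    have e : wpow v (k+1) = v ++ wpow v k := wpow_succ v k
    have h' : j < (v ++ wpow v k).length := e ▸ h
    rw [List.getElem_of_eq e h]
    by_cases hj : j < v.length
    · rw [List.getElem_append_left hj]
      congr 1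
      exact (Nat.mod_eq_of_lt hj).symm
    · push_neg at hj
      have h3 : j - v.length < (wpow v k).length := by
        simp at h'; omega
      rw [List.getElem_append_right hj]
      rw [ih _ h3 (Nat.mod_lt _ (Nat.lt_of_le_of_lt (Nat.zero_le _) h2))]
      congr 1
      conv_rhs => rw [← Nat.sub_add_cancel hj]
      rw [Nat.add_mod_right]

lemma run_eq_foldl {A Q : Type*} (δ : Q → A → Q) (q₀ : Q) (w : ℕ → A) (l : List A)
    (hw : ∀ i (h : i < l.length), w i = l[i]) :
    run δ q₀ w l.length = l.foldl δ q₀ := by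
  induction l using List.reverseRecOn with
  | nil => rfl
  | append_singleton l a ih =>
    have hlen : (l ++ [a]).length = l.length + 1 := by simp
    rw [hlen, run, List.foldl_append]
    have h1 : run δ q₀ w l.length = l.foldl δ q₀ := by
      apply ih
      intro i h
      rw [hw i (by simp; omega)]
      rw [List.getElem_append_left h]
    rw [h1]
    have h2 : w l.length = a := by
      rw [hw l.length (by simp)]
      simp
    rw [h2]
    simp

/-- in a weak DBA with `n` states, if the state `T(u·x^n)` lies
in an accepting SCC (every state mutually reachable with it is in `F`) and
`T(u·x^n) = T(u·x^n·x)`, then `u·x^ω` is accepted. -/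
theorem stmt_16 {A Q : Type*} [Fintype A] [Fintype Q]
    (δ : Q → A → Q) (q₀ : Q) (F : Set Q)
    (hweak : ∀ p q : Q, (∃ a : List A, a.foldl δ p = q) →
      (∃ b : List A, b.foldl δ q = p) → (p ∈ F ↔ q ∈ F))
    (u x : List A) (hx : x ≠ [])
    (haccSCC : ∀ p : Q,
      (∃ a : List A, a.foldl δ ((u ++ wpow x (Fintype.card Q)).foldl δ q₀) = p) →
      (∃ b : List A, b.foldl δ p = (u ++ wpow x (Fintype.card Q)).foldl δ q₀) →
      p ∈ F)
    (hloop : (u ++ wpow x (Fintype.card Q)).foldl δ q₀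
        = (u ++ wpow x (Fintype.card Q) ++ x).foldl δ q₀) :
    ∀ N : ℕ, ∃ n ≥ N, run δ q₀ (upWord u x hx) n ∈ F := by
  intro N
  set nc := Fintype.card Q with hnc
  have hxlen : 0 < x.length := List.length_pos_iff.mpr hx
  -- the run agrees with foldl at prefix lengths
  have hpre : ∀ k : ℕ, run δ q₀ (upWord u x hx) ((u ++ wpow x k).length)
      = (u ++ wpow x k).foldl δ q₀ := by
    intro k
    apply run_eq_foldl
    intro i h
    simp only [upWord]
    by_cases hi : i < u.length
    · rw [dif_pos hi, List.get_eq_getElem]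
      exact (List.getElem_append_left hi).symm
    · rw [dif_neg hi, List.get_eq_getElem]
      have hi' : u.length ≤ i := Nat.le_of_not_lt hi
      have h2 : i - u.length < (wpow x k).length := by
        simp at h; omega
      rw [List.getElem_append_right hi']
      exact (wpow_getElem x k _ h2 (Nat.mod_lt _ hxlen)).symm
  -- the loop: T(u x^{nc+m}) = T(u x^nc)
  have hstate : ∀ m : ℕ, (u ++ wpow x (nc + m)).foldl δ q₀
      = (u ++ wpow x nc).foldl δ q₀ := by
    intro m
    induction m with
    | zero => rfl
    | succ m ih =>
      rw [show nc + (m+1) = (nc + m) + 1 from rfl, wpow_succ', ← List.append_assoc,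
        List.foldl_append, ih, ← List.foldl_append, ← hloop]
  refine ⟨(u ++ wpow x (nc + N)).length, ?_, ?_⟩
  · have : N * 1 ≤ (nc + N) * x.length := Nat.mul_le_mul (by omega) hxlen
    simp [wpow_length]; omega
  · rw [hpre (nc + N), hstate N]
    exact haccSCC _ ⟨[], rfl⟩ ⟨[], rfl⟩
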